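/- There exist pure submonoids C, D of ℤ² with cl(C ∩ D) ≠ cl(C) ∩ cl(D): namely, for C = {(i,j) ∈ ℕ₀² : i < j or i = j = 0} and D = {(i,j) ∈ ℕ₀² : i > j or i = j = 0}, one has cl(C ∩ D) = {(0,0)} while cl(C) ∩ cl(D) = {(k,k) : k ∈ ℕ₀}. -/

import Mathlib

/-- Canonical embedding of `ℤⁿ` into `ℝⁿ`. -/
def coeR {n : ℕ} (α : Fin n → ℤ) : Fin n → ℝ := fun i => (α i : ℝ)

/-- Convex hull in `ℝⁿ` of a subset of `ℤⁿ`. -/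
def convC {n : ℕ} (C : Set (Fin n → ℤ)) : Set (Fin n → ℝ) :=
  convexHull ℝ (coeR '' C)

/-- The closure `cl(C) = ℤⁿ ∩ topological-closure(conv C)` of a subset of `ℤⁿ`. -/
def intCl {n : ℕ} (C : Set (Fin n → ℤ)) : Set (Fin n → ℤ) :=
  {α | coeR α ∈ closure (convC C)}

/-- `C` is pure: `kα ∈ C` with `k ≥ 1` implies `α ∈ C`. -/
def IsPure {n : ℕ} (C : Set (Fin n → ℤ)) : Prop :=
  ∀ (k : ℕ) (α : Fin n → ℤ), 1 ≤ k → k • α ∈ C → α ∈ C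

/-- `C` is a submonoid of `(ℤⁿ, +)` (as a set). -/
def IsSubmonoidSet {n : ℕ} (C : Set (Fin n → ℤ)) : Prop :=
  (0 : Fin n → ℤ) ∈ C ∧ ∀ a ∈ C, ∀ b ∈ C, a + b ∈ C

/-- `M` is a finitely generated monoid (as a subset of `ℤⁿ`). -/
def IsFGSet {n : ℕ} (M : Set (Fin n → ℤ)) : Prop :=
  ∃ F : Finset (Fin n → ℤ),
    (AddSubmonoid.closure (F : Set (Fin n → ℤ)) : Set (Fin n → ℤ)) = M

/-- `C` is almost prismal: for every real subspace `V ⊆ ℝⁿ`, `cl(C ∩ V)` is finitely generated. -/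
def AlmostPrismal {n : ℕ} (C : Set (Fin n → ℤ)) : Prop :=
  ∀ V : Submodule ℝ (Fin n → ℝ), IsFGSet (intCl {α ∈ C | coeR α ∈ V})

/-- `C` is prismal: pure and almost prismal. -/
def Prismal {n : ℕ} (C : Set (Fin n → ℤ)) : Prop := IsPure C ∧ AlmostPrismal C

/-- The monoid `{(i,j) ∈ ℕ₀² : i < j or i = j = 0}`. -/
def Cex : Set (Fin 2 → ℤ) :=
  {p | 0 ≤ p 0 ∧ 0 ≤ p 1 ∧ (p 0 < p 1 ∨ (p 0 = 0 ∧ p 1 = 0))}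

/-- The monoid `{(i,j) ∈ ℕ₀² : i > j or i = j = 0}`. -/
def Dex : Set (Fin 2 → ℤ) :=
  {p | 0 ≤ p 0 ∧ 0 ≤ p 1 ∧ (p 1 < p 0 ∨ (p 0 = 0 ∧ p 1 = 0))}

section AuxLemmas

lemma halfplane_convex (a b : Fin 2) :
    Convex ℝ {x : Fin 2 → ℝ | 0 ≤ x a ∧ x a ≤ x b} := by
  intro x hx y hy s t hs ht hst
  obtain ⟨hx1, hx2⟩ := hx
  obtain ⟨hy1, hy2⟩ := hy
  constructor <;> simp only [Pi.add_apply, Pi.smul_apply, smul_eq_mul] <;> nlinarith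

lemma halfplane_closed (a b : Fin 2) :
    IsClosed {x : Fin 2 → ℝ | 0 ≤ x a ∧ x a ≤ x b} := by
  exact IsClosed.inter (isClosed_le continuous_const (continuous_apply a))
    (isClosed_le (continuous_apply a) (continuous_apply b))

lemma cl_C_sub : intCl Cex ⊆ {p : Fin 2 → ℤ | 0 ≤ p 0 ∧ p 0 ≤ p 1} := by
  intro p hp
  have hsub : convC Cex ⊆ {x : Fin 2 → ℝ | 0 ≤ x 0 ∧ x 0 ≤ x 1} := by
    apply convexHull_min _ (halfplane_convex 0 1)
    rintro x ⟨q, ⟨h1, h2, h3⟩, rfl⟩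
    have hle : q 0 ≤ q 1 := by omega
    simp only [coeR, Set.mem_setOf_eq]
    exact ⟨by exact_mod_cast h1, by exact_mod_cast hle⟩
  have := closure_minimal hsub (halfplane_closed 0 1) hp
  simp only [coeR, Set.mem_setOf_eq] at this
  exact ⟨by exact_mod_cast this.1, by exact_mod_cast this.2⟩

lemma cl_D_sub : intCl Dex ⊆ {p : Fin 2 → ℤ | 0 ≤ p 1 ∧ p 1 ≤ p 0} := by
  intro p hp
  have hsub : convC Dex ⊆ {x : Fin 2 → ℝ | 0 ≤ x 1 ∧ x 1 ≤ x 0} := by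
    apply convexHull_min _ (halfplane_convex 1 0)
    rintro x ⟨q, ⟨h1, h2, h3⟩, rfl⟩
    have hle : q 1 ≤ q 0 := by omega
    simp only [coeR, Set.mem_setOf_eq]
    exact ⟨by exact_mod_cast h2, by exact_mod_cast hle⟩
  have := closure_minimal hsub (halfplane_closed 1 0) hp
  simp only [coeR, Set.mem_setOf_eq] at this
  exact ⟨by exact_mod_cast this.1, by exact_mod_cast this.2⟩

-- diagonal points are in the closure
lemma diag_mem (S : Set (Fin 2 → ℤ)) (h0 : (0 : Fin 2 → ℤ) ∈ S) (e : Fin 2 → ℤ)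
    (p : Fin 2 → ℤ) (hmem : ∀ n : ℕ, (n + 1) • p + e ∈ S) :
    p ∈ intCl S := by
  have hx : ∀ n : ℕ, (fun i => (p i : ℝ) + (e i : ℝ) / (n + 1)) ∈ convC S := by
    intro n
    have hq : coeR ((n + 1) • p + e) ∈ convC S :=
      subset_convexHull ℝ _ ⟨_, hmem n, rfl⟩
    have h0' : (0 : Fin 2 → ℝ) ∈ convC S := by
      have h : coeR (0 : Fin 2 → ℤ) ∈ convC S := subset_convexHull ℝ _ ⟨_, h0, rfl⟩
      have hz : coeR (0 : Fin 2 → ℤ) = 0 := by funext i; simp [coeR]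
      rwa [hz] at h
    have hn1 : (0:ℝ) < (n:ℝ) + 1 := by positivity
    have := (convex_convexHull ℝ (coeR '' S)) h0' hq
      (a := (n:ℝ)/(n+1)) (b := 1/((n:ℝ)+1)) (by positivity) (by positivity)
      (by field_simp)
    convert this using 1
    · rfl
    funext i
    simp only [Pi.add_apply, Pi.smul_apply, smul_eq_mul, smul_zero, Pi.zero_apply, coeR]
    push_cast
    field_simp
    push_cast [nsmul_eq_mul]
    ring
  have ht : Filter.Tendsto (fun n : ℕ => (fun i => (p i : ℝ) + (e i : ℝ) / (n + 1)))
      Filter.atTop (nhds (coeR p)) := by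
    rw [tendsto_pi_nhds]
    intro i
    have h1 : Filter.Tendsto (fun n : ℕ => (e i : ℝ) / (n + 1)) Filter.atTop (nhds 0) := by
      simpa [div_eq_mul_inv, one_div] using
        (tendsto_one_div_add_atTop_nhds_zero_nat).const_mul (e i : ℝ)
    simpa [coeR] using tendsto_const_nhds.add h1
  exact mem_closure_of_tendsto ht (Filter.Eventually.of_forall hx)

end AuxLemmas


lemma eq_zero_iff' (p : Fin 2 → ℤ) : p = 0 ↔ p 0 = 0 ∧ p 1 = 0 := by
  constructor
  · rintro rfl; exact ⟨rfl, rfl⟩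
  · rintro ⟨h0, h1⟩; funext i; fin_cases i <;> assumption

lemma smul_apply' (k : ℕ) (α : Fin 2 → ℤ) (i : Fin 2) : (k • α) i = (k : ℤ) * α i := by
  simp [Pi.smul_apply]

lemma pure_Cex : IsPure Cex := by
  intro k α hk h
  obtain ⟨h1, h2, h3⟩ := h
  rw [smul_apply'] at h1 h3
  rw [smul_apply'] at h2 h3
  have hK : (0:ℤ) < k := by exact_mod_cast hk
  refine ⟨nonneg_of_mul_nonneg_right h1 hK, nonneg_of_mul_nonneg_right h2 hK, ?_⟩
  rcases h3 with h | ⟨h, h'⟩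
  · exact Or.inl ((mul_lt_mul_iff_right₀ hK).1 h)
  · exact Or.inr ⟨(mul_eq_zero.1 h).resolve_left hK.ne',
      (mul_eq_zero.1 h').resolve_left hK.ne'⟩

lemma pure_Dex : IsPure Dex := by
  intro k α hk h
  obtain ⟨h1, h2, h3⟩ := h
  rw [smul_apply'] at h1 h3
  rw [smul_apply'] at h2 h3
  have hK : (0:ℤ) < k := by exact_mod_cast hk
  refine ⟨nonneg_of_mul_nonneg_right h1 hK, nonneg_of_mul_nonneg_right h2 hK, ?_⟩
  rcases h3 with h | ⟨h, h'⟩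
  · exact Or.inl ((mul_lt_mul_iff_right₀ hK).1 h)
  · exact Or.inr ⟨(mul_eq_zero.1 h).resolve_left hK.ne',
      (mul_eq_zero.1 h').resolve_left hK.ne'⟩

lemma mono_Cex : IsSubmonoidSet Cex := by
  constructor
  · exact ⟨le_refl 0, le_refl 0, Or.inr ⟨rfl, rfl⟩⟩
  · rintro a ⟨a1, a2, a3⟩ b ⟨b1, b2, b3⟩
    refine ⟨by simp; omega, by simp; omega, ?_⟩
    simp only [Pi.add_apply]
    omega

lemma mono_Dex : IsSubmonoidSet Dex := by
  constructor
  · exact ⟨le_refl 0, le_refl 0, Or.inr ⟨rfl, rfl⟩⟩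
  · rintro a ⟨a1, a2, a3⟩ b ⟨b1, b2, b3⟩
    refine ⟨by simp; omega, by simp; omega, ?_⟩
    simp only [Pi.add_apply]
    omega

lemma inter_eq : Cex ∩ Dex = {0} := by
  ext p
  simp only [Set.mem_inter_iff, Set.mem_singleton_iff, eq_zero_iff']
  constructor
  · rintro ⟨⟨a1, a2, a3⟩, ⟨b1, b2, b3⟩⟩; omega
  · rintro ⟨h0, h1⟩
    exact ⟨⟨h0.ge, h1.ge, Or.inr ⟨h0, h1⟩⟩, ⟨h0.ge, h1.ge, Or.inr ⟨h0, h1⟩⟩⟩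

lemma coeR_zero : coeR (0 : Fin 2 → ℤ) = 0 := by funext i; simp [coeR]

lemma intCl_zero : intCl ({0} : Set (Fin 2 → ℤ)) = {0} := by
  ext p
  simp only [intCl, convC, Set.image_singleton, convexHull_singleton, coeR_zero,
    closure_singleton, Set.mem_setOf_eq, Set.mem_singleton_iff]
  constructor
  · intro h
    funext i
    have := congrFun h i
    simp only [coeR, Pi.zero_apply] at this ⊢
    exact_mod_cast this
  · rintro rfl; exact coeR_zero

theorem closure_inter_ne_inter_closure :
    IsSubmonoidSet Cex ∧ IsPure Cex ∧ IsSubmonoidSet Dex ∧ IsPure Dex ∧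
    intCl (Cex ∩ Dex) = {0} ∧
    intCl Cex ∩ intCl Dex = {p : Fin 2 → ℤ | 0 ≤ p 0 ∧ p 1 = p 0} ∧
    intCl (Cex ∩ Dex) ≠ intCl Cex ∩ intCl Dex := by
  have h5 : intCl (Cex ∩ Dex) = {0} := by rw [inter_eq]; exact intCl_zero
  have h6 : intCl Cex ∩ intCl Dex = {p : Fin 2 → ℤ | 0 ≤ p 0 ∧ p 1 = p 0} := by
    apply Set.Subset.antisymm
    · rintro p ⟨hC, hD⟩
      obtain ⟨c1, c2⟩ := cl_C_sub hC
      obtain ⟨d1, d2⟩ := cl_D_sub hD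
      exact ⟨c1, le_antisymm d2 c2⟩
    · rintro p ⟨h0, h1⟩
      constructor
      · apply diag_mem Cex mono_Cex.1 (fun i => if i = 0 then 0 else 1)
        intro n
        refine ⟨?_, ?_, Or.inl ?_⟩ <;>
          simp only [Pi.add_apply, smul_apply'] <;> push_cast <;> nlinarith
      · apply diag_mem Dex mono_Dex.1 (fun i => if i = 0 then 1 else 0)
        intro n
        refine ⟨?_, ?_, Or.inl ?_⟩ <;>
          simp only [Pi.add_apply, smul_apply'] <;> push_cast <;> nlinarith
  refine ⟨mono_Cex, pure_Cex, mono_Dex, pure_Dex, h5, h6, ?_⟩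
  rw [h5, h6]
  intro h
  have hm : (fun _ => (1:ℤ)) ∈ {p : Fin 2 → ℤ | 0 ≤ p 0 ∧ p 1 = p 0} := ⟨zero_le_one, rfl⟩
  rw [← h] at hm
  have := congrFun hm 0
  simp at this
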